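/- Let L and L' be finite-dimensional 5-graded Lie algebras over a field k of characteristic different from 2 and 3, and let f : L → L' be a Lie algebra homomorphism with f(L_i) ⊆ L'_i for all i, such that the restriction f|_{L_i} : L_i → L'_i is bijective for each i ∈ {1, −1, 2, −2}. Fix σ ∈ {1, −1}. If x ∈ L_σ and s ∈ L_{2σ} are such that x + s is algebraic in L, then f(x) + f(s) is algebraic in L'. -/

import Mathlib

open Finset

section FiltSection

variable {k : Type*} [Field k] {M : Type*} [LieRing M] [LieAlgebra k M]

/-- Filtration by σ-weight. -/
def Filt (Mc : ℤ → Submodule k M) (σ : ℤ) (p : ℤ) : Submodule k M :=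
  ⨆ j : {j : ℤ // p ≤ σ * j}, Mc j

lemma le_Filt (Mc : ℤ → Submodule k M) (σ : ℤ) {p j : ℤ} (h : p ≤ σ * j) :
    Mc j ≤ Filt Mc σ p :=
  le_iSup (fun j : {j : ℤ // p ≤ σ * j} => Mc j.1) ⟨j, h⟩

lemma Filt_mono (Mc : ℤ → Submodule k M) (σ : ℤ) {p q : ℤ} (h : p ≤ q) :
    Filt Mc σ q ≤ Filt Mc σ p :=
  iSup_le fun j => le_Filt Mc σ (h.trans j.2)

lemma Filt_lie (Mc : ℤ → Submodule k M) (σ : ℤ)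
    (hbr : ∀ i j : ℤ, ∀ x ∈ Mc i, ∀ y ∈ Mc j, ⁅x, y⁆ ∈ Mc (i + j))
    {p q : ℤ} {u w : M} (hu : u ∈ Filt Mc σ p) (hw : w ∈ Filt Mc σ q) :
    ⁅u, w⁆ ∈ Filt Mc σ (p + q) := by
  refine Submodule.iSup_induction _
    (motive := fun u => ∀ w, w ∈ Filt Mc σ q → ⁅u, w⁆ ∈ Filt Mc σ (p + q)) hu ?_ ?_ ?_ w hw
  · rintro ⟨j₁, hj₁⟩ u hu w hw
    refine Submodule.iSup_induction _
      (motive := fun w => ⁅u, w⁆ ∈ Filt Mc σ (p + q)) hw ?_ ?_ ?_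
    · rintro ⟨j₂, hj₂⟩ w hw
      refine le_Filt Mc σ (p := p + q) (j := j₁ + j₂) ?_ (hbr j₁ j₂ u hu w hw)
      rw [mul_add]; exact add_le_add hj₁ hj₂
    · simp
    · intro w₁ w₂ h1 h2
      rw [lie_add]; exact add_mem h1 h2
  · intro w hw; simp
  · intro u₁ u₂ h1 h2 w hw
    rw [add_lie]; exact add_mem (h1 w hw) (h2 w hw)

lemma Filt_top (Mc : ℤ → Submodule k M) {σ : ℤ} (hσ : σ = 1 ∨ σ = -1)
    (htop : (⨆ j, Mc j) = ⊤) (hbound : ∀ i : ℤ, 2 < |i| → Mc i = ⊥) (u : M) :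
    u ∈ Filt Mc σ (-2) := by
  have h : (⊤ : Submodule k M) ≤ Filt Mc σ (-2) := by
    rw [← htop]
    refine iSup_le fun j => ?_
    by_cases h : (-2 : ℤ) ≤ σ * j
    · exact le_Filt Mc σ h
    · have hb : Mc j = ⊥ := by
        refine hbound j (lt_abs.mpr ?_)
        rcases hσ with h1 | h1 <;> subst h1 <;> [right; left] <;> omega
      simp [hb]
  exact h Submodule.mem_top

lemma Filt_bot (Mc : ℤ → Submodule k M) {σ : ℤ} (hσ : σ = 1 ∨ σ = -1)
    (hbound : ∀ i : ℤ, 2 < |i| → Mc i = ⊥) : Filt Mc σ 3 = ⊥ := by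
  refine le_bot_iff.mp (iSup_le fun j => ?_)
  have hb : Mc j.1 = ⊥ := by
    refine hbound j.1 (lt_abs.mpr ?_)
    have := j.2
    rcases hσ with h1 | h1 <;> subst h1 <;> [left; right] <;> omega
  exact hb ▸ le_rfl

end FiltSection

section Leibniz

variable {k : Type*} [Field k] {M : Type*} [LieRing M] [LieAlgebra k M]

lemma pow_lie_of_deriv (D : Module.End k M)
    (hD : ∀ u w : M, D ⁅u, w⁆ = ⁅D u, w⁆ + ⁅u, D w⁆) (n : ℕ) (a b : M) :
    (D ^ n) ⁅a, b⁆ =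
      ∑ i ∈ Finset.range (n + 1), n.choose i • ⁅(D ^ (n - i)) a, (D ^ i) b⁆ := by
  induction n with
  | zero => simp
  | succ n IH =>
    have hstep : ∀ (j : ℕ) (z : M), D ((D ^ j) z) = (D ^ (j + 1)) z := by
      intro j z; rw [pow_succ', Module.End.mul_apply]
    calc (D ^ (n + 1)) ⁅a, b⁆
        = D (∑ i ∈ range (n + 1), n.choose i • ⁅(D ^ (n - i)) a, (D ^ i) b⁆) := by
          rw [← IH, ← hstep]
      _ = (∑ i ∈ range (n + 1), n.choose i • ⁅(D ^ (n - i + 1)) a, (D ^ i) b⁆) +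
          ∑ i ∈ range (n + 1), n.choose i • ⁅(D ^ (n - i)) a, (D ^ (i + 1)) b⁆ := by
          rw [map_sum]
          simp_rw [map_nsmul, hD, hstep, smul_add, sum_add_distrib]
      _ = ((∑ i ∈ range (n + 1), n.choose i • ⁅(D ^ (n - i)) a, (D ^ (i + 1)) b⁆) +
            ∑ i ∈ range (n + 1), n.choose (i + 1) • ⁅(D ^ (n - i)) a, (D ^ (i + 1)) b⁆) +
          1 • ⁅(D ^ (n + 1)) a, (D ^ 0) b⁆ := by
          rw [add_comm, add_assoc]
          congr 1
          refine (sum_range_succ' _ _).trans (congr_arg₂ (· + ·) ?_ ?_)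
          · rw [sum_range_succ, Nat.choose_succ_self, zero_smul, add_zero]
            refine sum_congr rfl fun i hi => ?_
            rw [mem_range] at hi
            have he : n - (i + 1) + 1 = n - i := by omega
            rw [he]
          · rw [Nat.choose_zero_right, Nat.sub_zero]
      _ = (∑ i ∈ range (n + 1), (n + 1).choose (i + 1) •
              ⁅(D ^ (n + 1 - (i + 1))) a, (D ^ (i + 1)) b⁆) +
          1 • ⁅(D ^ (n + 1)) a, (D ^ 0) b⁆ := by
          simp_rw [Nat.choose_succ_succ, Nat.succ_sub_succ, add_smul, sum_add_distrib]
      _ = ∑ i ∈ range (n + 2), (n + 1).choose i • ⁅(D ^ (n + 1 - i)) a, (D ^ i) b⁆ := by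
          rw [sum_range_succ' _ (n + 1)]
          simp

end Leibniz

/-- Let L, L' be finite-dimensional 5-graded Lie algebras over a field k of
characteristic ≠ 2, 3, and f : L → L' a graded Lie algebra homomorphism restricting to a
bijection L_i → L'_i for i ∈ {1, -1, 2, -2}.  If x + s (x ∈ L_σ, s ∈ L_{2σ}, σ ∈ {1,-1})
is algebraic in L, then f(x) + f(s) is algebraic in L'. -/
theorem statement8
    (k : Type*) [Field k] (hchar2 : (2 : k) ≠ 0) (hchar3 : (3 : k) ≠ 0)
    (L : Type*) [LieRing L] [LieAlgebra k L] [FiniteDimensional k L]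
    (L' : Type*) [LieRing L'] [LieAlgebra k L'] [FiniteDimensional k L']
    (Lc : ℤ → Submodule k L)
    (hdirect : DirectSum.IsInternal Lc)
    (hbracket : ∀ i j : ℤ, ∀ x ∈ Lc i, ∀ y ∈ Lc j, ⁅x, y⁆ ∈ Lc (i + j))
    (hbound : ∀ i : ℤ, 2 < |i| → Lc i = ⊥)
    (Lc' : ℤ → Submodule k L')
    (hdirect' : DirectSum.IsInternal Lc')
    (hbracket' : ∀ i j : ℤ, ∀ x ∈ Lc' i, ∀ y ∈ Lc' j, ⁅x, y⁆ ∈ Lc' (i + j))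
    (hbound' : ∀ i : ℤ, 2 < |i| → Lc' i = ⊥)
    (f : L →ₗ⁅k⁆ L')
    (hgraded : ∀ i : ℤ, ∀ x ∈ Lc i, f x ∈ Lc' i)
    (hsurj : ∀ i ∈ ({1, -1, 2, -2} : Set ℤ), ∀ y ∈ Lc' i, ∃ x ∈ Lc i, f x = y)
    (hinj : ∀ i ∈ ({1, -1, 2, -2} : Set ℤ), ∀ x ∈ Lc i, ∀ x' ∈ Lc i, f x = f x' → x = x')
    (σ : ℤ) (hσ : σ = 1 ∨ σ = -1)
    (x : L) (hx : x ∈ Lc σ) (s : L) (hs : s ∈ Lc (2 * σ))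
    (halg : ∃ g : L ≃ₗ⁅k⁆ L, ∀ a : L,
      g a = (∑ i ∈ Finset.range 5,
        ((i.factorial : k)⁻¹) • (LieAlgebra.ad k L (x + s)) ^ i) a) :
    ∃ g' : L' ≃ₗ⁅k⁆ L', ∀ a : L',
      g' a = (∑ i ∈ Finset.range 5,
        ((i.factorial : k)⁻¹) • (LieAlgebra.ad k L' (f x + f s)) ^ i) a := by
  classical
  obtain ⟨g, hg⟩ := halg
  set D : Module.End k L := LieAlgebra.ad k L (x + s) with hDdef
  set D' : Module.End k L' := LieAlgebra.ad k L' (f x + f s) with hD'def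
  set E : Module.End k L := ∑ i ∈ Finset.range 5, ((i.factorial : k)⁻¹) • D ^ i with hEdef
  set E' : Module.End k L' := ∑ i ∈ Finset.range 5, ((i.factorial : k)⁻¹) • D' ^ i with hE'def
  -- basic graded memberships
  have hfx : f x ∈ Lc' σ := hgraded σ x hx
  have hfs : f s ∈ Lc' (2 * σ) := hgraded (2 * σ) s hs
  have hσσ : σ * σ = 1 := by rcases hσ with h | h <;> subst h <;> norm_num
  have hσ2 : σ * (2 * σ) = 2 := by rcases hσ with h | h <;> subst h <;> norm_num
  have hvF : f x + f s ∈ Filt Lc' σ 1 :=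
    add_mem (le_Filt Lc' σ (by omega) hfx) (le_Filt Lc' σ (by omega) hfs)
  -- D' raises filtration
  have hDF : ∀ (p : ℤ) (u : L'), u ∈ Filt Lc' σ p → D' u ∈ Filt Lc' σ (1 + p) := by
    intro p u hu
    have : D' u = ⁅f x + f s, u⁆ := by rw [hD'def]; rfl
    rw [this]
    exact Filt_lie Lc' σ hbracket' hvF hu
  have hDpow : ∀ (m : ℕ) (p : ℤ) (u : L'), u ∈ Filt Lc' σ p →
      (D' ^ m) u ∈ Filt Lc' σ (p + m) := by
    intro m
    induction m with
    | zero => intro p u hu; simpa using hu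
    | succ m IH =>
      intro p u hu
      have h1 : (D' ^ (m + 1)) u = D' ((D' ^ m) u) := by
        rw [pow_succ', Module.End.mul_apply]
      rw [h1]
      have := hDF (p + m) _ (IH p u hu)
      convert this using 2
      push_cast
      ring
  have hD5 : ∀ u : L', (D' ^ 5) u = 0 := by
    intro u
    have h1 := hDpow 5 (-2) u
      (Filt_top Lc' hσ hdirect'.submodule_iSup_eq_top hbound' u)
    have h2 : ((-2 : ℤ) + (5 : ℕ)) = 3 := by norm_num
    rw [h2, Filt_bot Lc' hσ hbound'] at h1
    simpa using h1
  -- f intertwines D and D'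
  have hfD : ∀ a : L, f (D a) = D' (f a) := by
    intro a
    rw [hDdef, hD'def, LieAlgebra.ad_apply, LieAlgebra.ad_apply, ← map_add f, ← f.map_lie]
  have hfDpow : ∀ (m : ℕ) (a : L), f ((D ^ m) a) = (D' ^ m) (f a) := by
    intro m
    induction m with
    | zero => intro a; simp
    | succ m IH =>
      intro a
      rw [pow_succ', pow_succ', Module.End.mul_apply, Module.End.mul_apply, hfD, IH]
  have hco : ∀ z : L, f z = (f : L →ₗ[k] L') z := fun _ => rfl
  have hfE : ∀ a : L, f (E a) = E' (f a) := by
    intro a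
    rw [hEdef, hE'def, LinearMap.sum_apply, LinearMap.sum_apply, hco, map_sum]
    refine Finset.sum_congr rfl fun i _ => ?_
    rw [LinearMap.smul_apply, map_smul, LinearMap.smul_apply, ← hco, hfDpow]
  have hElie : ∀ a b : L, E ⁅a, b⁆ = ⁅E a, E b⁆ := by
    intro a b
    rw [← hg, ← hg, ← hg]
    exact g.map_lie a b
  -- D' is a derivation
  have hderiv : ∀ u w : L', D' ⁅u, w⁆ = ⁅D' u, w⁆ + ⁅u, D' w⁆ := by
    intro u w
    rw [hD'def, LieAlgebra.ad_apply, LieAlgebra.ad_apply, LieAlgebra.ad_apply]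
    exact leibniz_lie _ _ _
  -- multiplicativity of E'
  have key : ∀ m : ℤ, ∀ a ∈ Lc' m, ∀ n : ℤ, ∀ b ∈ Lc' n,
      E' ⁅a, b⁆ = ⁅E' a, E' b⁆ := by
    intro m a ha n b hb
    by_cases hm : 2 < |m|
    · have ha0 : a = 0 := by simpa [hbound' m hm] using ha
      simp [ha0]
    by_cases hn : 2 < |n|
    · have hb0 : b = 0 := by simpa [hbound' n hn] using hb
      simp [hb0]
    rw [not_lt, abs_le] at hm hn
    by_cases hlow : σ * m + σ * n ≤ -3
    · -- low-weight case: use surjectivity of f on the relevant pieces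
      have hmmem : m ∈ ({1, -1, 2, -2} : Set ℤ) := by
        simp only [Set.mem_insert_iff, Set.mem_singleton_iff]
        rcases hσ with h | h <;> subst h <;> omega
      have hnmem : n ∈ ({1, -1, 2, -2} : Set ℤ) := by
        simp only [Set.mem_insert_iff, Set.mem_singleton_iff]
        rcases hσ with h | h <;> subst h <;> omega
      obtain ⟨a₀, ha₀, rfl⟩ := hsurj m hmmem a ha
      obtain ⟨b₀, hb₀, rfl⟩ := hsurj n hnmem b hb
      rw [← f.map_lie, ← hfE, hElie, f.map_lie, hfE, hfE]
    · -- high-weight case: Leibniz formula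
      push_neg at hlow
      have hzero : ∀ i j : ℕ, 5 ≤ i + j → ⁅(D' ^ i) a, (D' ^ j) b⁆ = 0 := by
        intro i j hij
        have h1 : (D' ^ i) a ∈ Filt Lc' σ (σ * m + i) :=
          hDpow i (σ * m) a (le_Filt Lc' σ le_rfl ha)
        have h2 : (D' ^ j) b ∈ Filt Lc' σ (σ * n + j) :=
          hDpow j (σ * n) b (le_Filt Lc' σ le_rfl hb)
        have h3 := Filt_lie Lc' σ hbracket' h1 h2
        have h4 : Filt Lc' σ (σ * m + i + (σ * n + j)) ≤ Filt Lc' σ 3 :=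
          Filt_mono Lc' σ (by omega)
        have h5 := h4 h3
        rw [Filt_bot Lc' hσ hbound'] at h5
        simpa using h5
      have hexp : ∀ z : L', E' z = ∑ i ∈ Finset.range 5, ((i.factorial : k)⁻¹) • (D' ^ i) z := by
        intro z
        rw [hE'def, LinearMap.sum_apply]
        exact Finset.sum_congr rfl fun i _ => LinearMap.smul_apply _ _ _
      rw [hexp, hexp, hexp]
      simp only [pow_lie_of_deriv D' hderiv _ a b]
      simp only [Finset.sum_range_succ, Finset.sum_range_zero, zero_add, add_lie, lie_add,
        smul_lie, lie_smul, pow_zero, Module.End.one_apply, Nat.factorial, Nat.choose,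
        Nat.cast_ofNat, Nat.cast_one, inv_one, one_smul]
      norm_num
      have z41 : ⁅(D' ^ 4) a, D' b⁆ = 0 := by simpa using hzero 4 1 (by norm_num)
      have z32 : ⁅(D' ^ 3) a, (D' ^ 2) b⁆ = 0 := by simpa using hzero 3 2 (by norm_num)
      have z42 : ⁅(D' ^ 4) a, (D' ^ 2) b⁆ = 0 := by simpa using hzero 4 2 (by norm_num)
      have z23 : ⁅(D' ^ 2) a, (D' ^ 3) b⁆ = 0 := by simpa using hzero 2 3 (by norm_num)
      have z33 : ⁅(D' ^ 3) a, (D' ^ 3) b⁆ = 0 := by simpa using hzero 3 3 (by norm_num)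
      have z43 : ⁅(D' ^ 4) a, (D' ^ 3) b⁆ = 0 := by simpa using hzero 4 3 (by norm_num)
      have z14 : ⁅D' a, (D' ^ 4) b⁆ = 0 := by simpa using hzero 1 4 (by norm_num)
      have z24 : ⁅(D' ^ 2) a, (D' ^ 4) b⁆ = 0 := by simpa using hzero 2 4 (by norm_num)
      have z34 : ⁅(D' ^ 3) a, (D' ^ 4) b⁆ = 0 := by simpa using hzero 3 4 (by norm_num)
      have z44 : ⁅(D' ^ 4) a, (D' ^ 4) b⁆ = 0 := by simpa using hzero 4 4 (by norm_num)
      simp only [z41, z32, z42, z23, z33, z43, z14, z24, z34, z44, smul_zero, add_zero]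
      have h6 : (6 : k) ≠ 0 := by
        have := mul_ne_zero hchar2 hchar3; norm_num at this; exact_mod_cast this
      have h24 : (24 : k) ≠ 0 := by
        have := mul_ne_zero (pow_ne_zero 3 hchar2) hchar3; norm_num at this; exact_mod_cast this
      match_scalars <;> field_simp <;> norm_num
  have hmul : ∀ a b : L', E' ⁅a, b⁆ = ⁅E' a, E' b⁆ := by
    intro a b
    have ha : a ∈ ⨆ j, Lc' j := by
      rw [hdirect'.submodule_iSup_eq_top]; exact Submodule.mem_top
    have hb : b ∈ ⨆ j, Lc' j := by
      rw [hdirect'.submodule_iSup_eq_top]; exact Submodule.mem_top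
    refine Submodule.iSup_induction _
      (motive := fun a => ∀ b, b ∈ (⨆ j, Lc' j) → E' ⁅a, b⁆ = ⁅E' a, E' b⁆) ha ?_ ?_ ?_ b hb
    · intro m a ha b hb
      refine Submodule.iSup_induction _
        (motive := fun b => E' ⁅a, b⁆ = ⁅E' a, E' b⁆) hb ?_ ?_ ?_
      · intro n b hb; exact key m a ha n b hb
      · simp
      · intro b₁ b₂ h1 h2
        rw [lie_add, map_add, h1, h2, map_add, lie_add]
    · intro b hb; simp
    · intro a₁ a₂ h1 h2 b hb
      rw [add_lie, map_add, h1 b hb, h2 b hb, map_add, add_lie]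
  -- bijectivity of E'
  have hD'5 : D' ^ 5 = 0 := LinearMap.ext hD5
  set P : Module.End k L' :=
    ∑ i ∈ Finset.range 4, (((i + 1).factorial : k)⁻¹) • D' ^ i with hPdef
  have hEN : E' = D' * P + 1 := by
    rw [hE'def, Finset.sum_range_succ']
    congr 1
    · rw [hPdef, Finset.mul_sum]
      refine Finset.sum_congr rfl fun i _ => ?_
      rw [mul_smul_comm, ← pow_succ']
    · norm_num [Nat.factorial]
  have hcomm : Commute D' P :=
    Commute.sum_right _ _ _ fun i _ => ((Commute.refl D').pow_right i).smul_right _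
  have hnil : (D' * P) ^ 5 = 0 := by
    rw [hcomm.mul_pow, hD'5, zero_mul]
  have hunit : IsUnit E' := by
    rw [hEN]; exact IsNilpotent.isUnit_add_one ⟨5, hnil⟩
  have hbij : Function.Bijective E' := (Module.End.isUnit_iff E').mp hunit
  exact ⟨LieEquiv.ofBijective { toLinearMap := E', map_lie' := fun {a b} => hmul a b } hbij,
    fun a => rfl⟩
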